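/- Every function $f$ in the cone $Conv$ of continuous, concave, nonnegative functions on $(0, \infty)$ belongs to the sum $L^\infty + L^\infty(1/t) = L^\infty(\min(1, 1/s))$, and its norm in this sum space equals $f(1)$. -/

import Mathlib

open ENNReal Set

noncomputable section

def Ninf (f : ℝ → ℝ) : ℝ≥0∞ := ⨆ (t : ℝ) (_ : 0 < t), ENNReal.ofReal |f t|

def Ninf1 (f : ℝ → ℝ) : ℝ≥0∞ :=
  ⨆ (t : ℝ) (_ : 0 < t), ENNReal.ofReal |f t| / ENNReal.ofReal t

def Kfun (N0 N1 : (ℝ → ℝ) → ℝ≥0∞) (t : ℝ) (x : ℝ → ℝ) : ℝ≥0∞ :=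
  ⨅ (y : (ℝ → ℝ) × (ℝ → ℝ)) (_ : x = y.1 + y.2), N0 y.1 + ENNReal.ofReal t * N1 y.2

/-- Every continuous, concave, nonnegative function `f` on `(0, ∞)` belongs to
the sum `L^∞ + L^∞(1/t) = L^∞(min(1, 1/s))`, and its norm in this sum space
(the K-functional at `t = 1`, which also equals the weighted sup norm
`sup_{s>0} |f s| · min(1, 1/s)`) equals `f 1`. -/
theorem conv_in_sum_norm (f : ℝ → ℝ)
    (hcont : ContinuousOn f (Ioi (0 : ℝ)))
    (hconc : ConcaveOn ℝ (Ioi (0 : ℝ)) f)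
    (hnonneg : ∀ t : ℝ, 0 < t → 0 ≤ f t) :
    Kfun Ninf Ninf1 1 f = ENNReal.ofReal (f 1) ∧
    (⨆ (s : ℝ) (_ : 0 < s), ENNReal.ofReal (|f s| * min 1 (1 / s)))
      = ENNReal.ofReal (f 1) := by
  have hc : 0 ≤ f 1 := hnonneg 1 one_pos
  -- the set of slopes of chords from the point (1, f 1) to the right
  set S : Set ℝ := (fun s => (f s - f 1) / (s - 1)) '' Ioi (1 : ℝ) with hS
  have hSne : S.Nonempty := ⟨_, ⟨2, by norm_num, rfl⟩⟩
  have hbdd : BddAbove S := by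
    refine ⟨(f 1 - f (1 / 2)) / (1 - 1 / 2), ?_⟩
    rintro x ⟨s, hs, rfl⟩
    exact hconc.slope_anti_adjacent (x := 1 / 2) (y := 1) (z := s) (by norm_num)
      (mem_Ioi.mpr (lt_trans one_pos hs)) (by norm_num) hs
  set m := sSup S with hm
  have hmem : ∀ s : ℝ, 1 < s → (f s - f 1) / (s - 1) ≤ m := fun s hs =>
    le_csSup hbdd ⟨s, hs, rfl⟩
  have hub : ∀ s : ℝ, 0 < s → s < 1 → m ≤ (f 1 - f s) / (1 - s) := by
    intro s hs hs1
    refine csSup_le hSne ?_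
    rintro x ⟨t, ht, rfl⟩
    exact hconc.slope_anti_adjacent (x := s) (y := 1) (z := t) hs
      (mem_Ioi.mpr (lt_trans one_pos ht)) hs1 ht
  -- m ≥ 0
  have hm0 : 0 ≤ m := by
    by_contra hmneg
    push_neg at hmneg
    set s : ℝ := 2 + f 1 / (-m) with hs_def
    have hq : 0 ≤ f 1 / (-m) := div_nonneg hc (by linarith)
    have hs1 : 1 < s := by simp only [hs_def]; linarith
    have h2 := hmem s hs1
    have hfs : 0 ≤ f s := hnonneg s (by linarith)
    have h3 : (0 - f 1) / (s - 1) ≤ (f s - f 1) / (s - 1) := by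
      gcongr
    have h4 : (0 - f 1) / (s - 1) ≤ m := le_trans h3 h2
    rw [div_le_iff₀ (by linarith : (0 : ℝ) < s - 1)] at h4
    have hmne : m ≠ 0 := by linarith
    have h6 : m * (f 1 / -m) = -(f 1) := by
      field_simp
    have h5 : m * (s - 1) = m - f 1 := by
      calc m * (s - 1) = m * 1 + m * (f 1 / -m) := by rw [hs_def]; ring
        _ = m - f 1 := by rw [h6]; ring
    linarith
  -- m ≤ f 1
  have hmc : m ≤ f 1 := by
    by_contra hmc
    push_neg at hmc
    have hmpos : 0 < m := lt_of_le_of_lt hc hmc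
    set s : ℝ := (m - f 1) / (2 * m) with hs_def
    have hs : 0 < s := div_pos (by linarith) (by linarith)
    have hs1 : s < 1 := by
      rw [div_lt_one (by linarith)]
      linarith
    have h2 := hub s hs hs1
    have hfs : 0 ≤ f s := hnonneg s hs
    rw [le_div_iff₀ (by linarith : (0 : ℝ) < 1 - s)] at h2
    have h5 : m * s = (m - f 1) / 2 := by
      have hmne : m ≠ 0 := by linarith
      field_simp [hs_def]
      rw [hs_def]; field_simp
    nlinarith
  -- the supporting-line inequality
  have hline : ∀ s : ℝ, 0 < s → f s ≤ (f 1 - m) + m * s := by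
    intro s hs
    rcases lt_trichotomy s 1 with h | h | h
    · have h2 := hub s hs h
      rw [le_div_iff₀ (by linarith : (0 : ℝ) < 1 - s)] at h2
      nlinarith
    · rw [h]; ring_nf; simp
    · have h2 := hmem s h
      rw [div_le_iff₀ (by linarith : (0 : ℝ) < s - 1)] at h2
      nlinarith
  -- pointwise bound for the weighted sup
  have key : ∀ s : ℝ, 0 < s → |f s| * min 1 (1 / s) ≤ f 1 := by
    intro s hs
    rw [abs_of_nonneg (hnonneg s hs)]
    rcases le_total s 1 with h | h
    · rw [min_eq_left (by rw [le_div_iff₀ hs]; linarith)]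
      nlinarith [hline s hs]
    · rw [min_eq_right (by rw [div_le_one hs]; exact h)]
      rw [mul_one_div, div_le_iff₀ hs]
      nlinarith [hline s hs]
  -- the weighted sup equals f 1
  have hsup : (⨆ (s : ℝ) (_ : 0 < s), ENNReal.ofReal (|f s| * min 1 (1 / s)))
      = ENNReal.ofReal (f 1) := by
    refine le_antisymm (iSup₂_le fun s hs => ENNReal.ofReal_le_ofReal (key s hs)) ?_
    refine le_iSup₂_of_le 1 one_pos (le_of_eq ?_)
    rw [abs_of_nonneg hc]
    norm_num
  refine ⟨le_antisymm ?_ ?_, hsup⟩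
  · -- upper bound for the K-functional: explicit decomposition
    have hdecomp : f = (fun s => min (f s) (f 1 - m)) +
        (f - fun s => min (f s) (f 1 - m)) := by
      funext s; simp
    refine le_trans (iInf₂_le ((fun s => min (f s) (f 1 - m)),
      (f - fun s => min (f s) (f 1 - m))) hdecomp) ?_
    rw [ENNReal.ofReal_one, one_mul]
    have hg : Ninf (fun s => min (f s) (f 1 - m)) ≤ ENNReal.ofReal (f 1 - m) := by
      refine iSup₂_le fun t ht => ENNReal.ofReal_le_ofReal ?_
      rw [abs_of_nonneg (le_min (hnonneg t ht) (by linarith))]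
      exact min_le_right _ _
    have hh : Ninf1 (f - fun s => min (f s) (f 1 - m)) ≤ ENNReal.ofReal m := by
      refine iSup₂_le fun t ht => ?_
      rw [ENNReal.div_le_iff (by simpa using ht) ENNReal.ofReal_ne_top]
      rw [← ENNReal.ofReal_mul hm0]
      refine ENNReal.ofReal_le_ofReal ?_
      simp only [Pi.sub_apply]
      rcases le_total (f t) (f 1 - m) with h | h
      · rw [min_eq_left h]
        simp [mul_nonneg hm0 ht.le]
      · rw [min_eq_right h, abs_of_nonneg (by linarith)]
        nlinarith [hline t ht]
    calc Ninf (fun s => min (f s) (f 1 - m)) +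
        Ninf1 (f - fun s => min (f s) (f 1 - m))
        ≤ ENNReal.ofReal (f 1 - m) + ENNReal.ofReal m := add_le_add hg hh
      _ = ENNReal.ofReal (f 1) := by
          rw [← ENNReal.ofReal_add (by linarith) hm0]
          ring_nf
  · -- lower bound for the K-functional
    refine le_iInf₂ fun y hy => ?_
    have h1' : f 1 = y.1 1 + y.2 1 := by rw [hy]; simp
    have habs : ENNReal.ofReal (f 1)
        ≤ ENNReal.ofReal |y.1 1| + ENNReal.ofReal |y.2 1| := by
      rw [← ENNReal.ofReal_add (abs_nonneg _) (abs_nonneg _)]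
      exact ENNReal.ofReal_le_ofReal
        (by rw [h1']; exact (le_abs_self _).trans (abs_add_le _ _))
    refine habs.trans (add_le_add ?_ ?_)
    · exact le_iSup₂_of_le 1 one_pos le_rfl
    · rw [ENNReal.ofReal_one, one_mul]
      have heq : ENNReal.ofReal |y.2 1| = ENNReal.ofReal |y.2 1| / ENNReal.ofReal 1 := by
        simp
      rw [heq]
      exact le_iSup₂_of_le 1 one_pos le_rfl

end
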